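/- For every natural number n ≥ 1, the generalized quaternion algebra H_ℚ(−1, (l²+4)·a_{2n+1}) splits, i.e. it is isomorphic as a ℚ-algebra to the algebra of 2×2 matrices over ℚ. -/

import Mathlib

/-- The sequence `a` defined by `a 0 = 0`, `a 1 = 1`, `a (n+2) = l * a (n+1) + a n`. -/
def a (l : ℕ) : ℕ → ℤ
  | 0 => 0
  | 1 => 1
  | n + 2 => l * a l (n + 1) + a l n

/-- The sequence `b` defined by `b 0 = 2`, `b 1 = l`, `b (n+2) = l * b (n+1) + b n`. -/
def b (l : ℕ) : ℕ → ℤ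
  | 0 => 2
  | 1 => (l : ℤ)
  | n + 2 => l * b l (n + 1) + b l n

lemma a_add' (l m : ℕ) : ∀ n, a l (m + n + 1) = a l (m + 1) * a l (n + 1) + a l m * a l n := by
  intro n
  induction n using Nat.twoStepInduction with
  | zero => simp [a]
  | one => show a l (m + 2) = _; simp [a]; ring
  | more n ih1 ih2 =>
    have h : m + (n + 2) + 1 = (m + n + 1) + 2 := by omega
    have h2 : m + (n + 1) + 1 = (m + n + 1) + 1 := by omega
    rw [h, show a l ((m+n+1)+2) = l * a l ((m+n+1)+1) + a l (m+n+1) from rfl,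
      ← h2, ih2, ih1,
      show a l (n+3) = l * a l (n+2) + a l (n+1) from rfl,
      show a l (n+2) = l * a l (n+1) + a l n from rfl]
    ring

lemma b_eq' (l : ℕ) : ∀ n, b l n = 2 * a l (n + 1) - l * a l n := by
  intro n
  induction n using Nat.twoStepInduction with
  | zero => simp [a, b]
  | one => simp [a, b]; ring
  | more n ih1 ih2 =>
    rw [show b l (n+2) = l * b l (n+1) + b l n from rfl, ih1, ih2,
      show a l (n+3) = l * a l (n+2) + a l (n+1) from rfl,
      show a l (n+2) = l * a l (n+1) + a l n from rfl]
    ring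

lemma sum_sq' (l n : ℕ) : ((l : ℤ)^2 + 4) * a l (2*n + 1) = (b l n)^2 + (b l (n+1))^2 := by
  have h := a_add' l n n
  rw [show 2*n+1 = n + n + 1 by omega, h, b_eq' l n, b_eq' l (n+1),
    show a l (n+2) = l * a l (n+1) + a l n from rfl]
  ring

lemma b_pos' (l : ℕ) (hl : 0 < l) : ∀ n, 0 < b l n := by
  intro n
  induction n using Nat.twoStepInduction with
  | zero => norm_num [b]
  | one => simpa [b] using hl
  | more n ih1 ih2 =>
    show 0 < l * b l (n+1) + b l n
    have : (1:ℤ) ≤ l := by exact_mod_cast hl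
    nlinarith

open Quaternion QuaternionAlgebra in
/-- A quaternionic basis of `M₂(ℚ)` of type `(-1, x² + y²)`. -/
noncomputable def matBasis (x y : ℚ) :
    QuaternionAlgebra.Basis (Matrix (Fin 2) (Fin 2) ℚ) (-1) 0 (x^2 + y^2) where
  i := !![0, -1; 1, 0]
  j := !![x, y; y, -x]
  k := !![-y, x; x, y]
  i_mul_i := by
    simp [Matrix.mul_fin_two, Matrix.one_fin_two, Matrix.smul_of, Matrix.smul_cons,
      Matrix.smul_empty]
  j_mul_j := by
    simp [Matrix.mul_fin_two, Matrix.one_fin_two, Matrix.smul_of, Matrix.smul_cons,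
      Matrix.smul_empty]
    ring_nf
    simp
  i_mul_j := by simp [Matrix.mul_fin_two]
  j_mul_i := by simp [Matrix.mul_fin_two, Matrix.neg_of]

open Quaternion in
lemma splits_of_sum_sq (x y : ℚ) (hβ : x^2 + y^2 ≠ 0) :
    Nonempty (ℍ[ℚ, -1, x^2 + y^2] ≃ₐ[ℚ] Matrix (Fin 2) (Fin 2) ℚ) := by
  set φ := (matBasis x y).liftHom with hφ
  have hsurj : Function.Surjective φ := by
    intro M
    refine ⟨⟨(M 0 0 + M 1 1)/2, (M 1 0 - M 0 1)/2,
      (((M 0 0 - M 1 1)/2)*x + ((M 1 0 + M 0 1)/2)*y)/(x^2+y^2),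
      (((M 1 0 + M 0 1)/2)*x - ((M 0 0 - M 1 1)/2)*y)/(x^2+y^2)⟩, ?_⟩
    show (matBasis x y).lift _ = M
    unfold QuaternionAlgebra.Basis.lift
    ext i j
    fin_cases i <;> fin_cases j <;>
      simp [matBasis, Algebra.algebraMap_eq_smul_one, Matrix.one_fin_two, Matrix.smul_of,
        Matrix.smul_cons, Matrix.smul_empty, Matrix.add_apply] <;>
      field_simp <;> ring
  have hinj : Function.Injective φ :=
    (LinearMap.injective_iff_surjective_of_finrank_eq_finrank
      (f := φ.toLinearMap) (by
        rw [QuaternionAlgebra.finrank_eq_four, Module.finrank_matrix]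
        simp)).2 hsurj
  exact ⟨AlgEquiv.ofBijective φ ⟨hinj, hsurj⟩⟩

open Quaternion in
/-- The quaternion algebra `H_ℚ(-1, (l²+4)·a_{2n+1})` splits. -/
theorem quat_alg_splits_la (l : ℕ) (hl : 0 < l) (n : ℕ) (hn : 1 ≤ n) :
    Nonempty (ℍ[ℚ, -1, ((((l : ℤ) ^ 2 + 4) * a l (2 * n + 1) : ℤ) : ℚ)] ≃ₐ[ℚ]
      Matrix (Fin 2) (Fin 2) ℚ) := by
  have hx : ((((l : ℤ) ^ 2 + 4) * a l (2 * n + 1) : ℤ) : ℚ) =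
      ((b l n : ℚ))^2 + ((b l (n+1) : ℚ))^2 := by
    exact_mod_cast congrArg (fun z : ℤ => (z : ℚ)) (sum_sq' l n)
  rw [hx]
  refine splits_of_sum_sq _ _ ?_
  have h1 := b_pos' l hl n
  have h2 := b_pos' l hl (n+1)
  positivity
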